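/- For the two-dimensional Sobol' sequence (x_n) with x_n = (φ(n), φ(P_m n)), for every m ∈ ℕ and every dyadic rectangle [a/2^k, (a+1)/2^k) × [b/2^l, (b+1)/2^l) with k + l = m, 0 ≤ a < 2^k, 0 ≤ b < 2^l, exactly one of the first 2^m points x_0, ..., x_{2^m - 1} lies in the rectangle. -/

import Mathlib

open Finset

/-- The `i`-th binary digit of `n` (1-indexed: `n = Σ nᵢ 2^(i-1)`). -/
def bit (n i : ℕ) : ℕ := if Nat.testBit n (i-1) then 1 else 0

/-- `φ` of the digit vector of `n` truncated to `m` digits: `Σ nᵢ 2^(-i)`. -/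
noncomputable def phi (m n : ℕ) : ℝ :=
  ∑ i ∈ Finset.Icc 1 m, (bit n i : ℝ) * (2:ℝ) ^ (-(i:ℤ))

/-- The `i`-th coordinate of `P_m · (digit vector of n)` over `F₂`, where
`P_m[i][j] = C(j-1, i-1) mod 2` is the upper-triangular Pascal matrix. -/
def pbit (m n i : ℕ) : ℕ :=
  (∑ j ∈ Finset.Icc 1 m, (Nat.choose (j-1) (i-1) % 2) * bit n j) % 2

/-- `φ(P_m · n)`. -/
noncomputable def phiP (m n : ℕ) : ℝ :=
  ∑ i ∈ Finset.Icc 1 m, (pbit m n i : ℝ) * (2:ℝ) ^ (-(i:ℤ))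

/-- The `n`-th point of the two-dimensional Sobol' sequence (with `n < 2^m`). -/
noncomputable def sobol (m n : ℕ) : ℝ × ℝ := (phi m n, phiP m n)

/-- ℓ^∞ distance on ℝ². -/
noncomputable def linf (a b : ℝ × ℝ) : ℝ := max |a.1 - b.1| |a.2 - b.2|

/-- ℓ^∞ separation radius of the first `N` Sobol' points (digit length `m`). -/
noncomputable def sep (m N : ℕ) : ℝ :=
  (1/2) * sInf {d : ℝ | ∃ p q : ℕ, p < N ∧ q < N ∧ p ≠ q ∧ d = linf (sobol m p) (sobol m q)}

/-- ℓ^∞ covering radius of the first `N` Sobol' points (digit length `m`). -/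
noncomputable def cov (m N : ℕ) : ℝ :=
  sSup {r : ℝ | ∃ x : ℝ × ℝ, x.1 ∈ Set.Icc (0:ℝ) 1 ∧ x.2 ∈ Set.Icc (0:ℝ) 1 ∧
    r = sInf {d : ℝ | ∃ n : ℕ, n < N ∧ d = linf x (sobol m n)}}


def Dsum (k : ℕ) (c : ℕ → ℕ) : ℕ := ∑ i ∈ Finset.Icc 1 k, c i * 2 ^ (k - i)

lemma Dsum_zero (c : ℕ → ℕ) : Dsum 0 c = 0 := by simp [Dsum]

lemma Dsum_succ (k : ℕ) (c : ℕ → ℕ) : Dsum (k+1) c = c (k+1) + 2 * Dsum k c := by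
  unfold Dsum
  rw [Finset.sum_Icc_succ_top (by omega), Finset.mul_sum]
  simp only [Nat.sub_self, pow_zero, mul_one]
  rw [add_comm]
  congr 1
  refine Finset.sum_congr rfl fun i hi => ?_
  simp only [Finset.mem_Icc] at hi
  have h : k + 1 - i = (k - i) + 1 := by omega
  rw [h, pow_succ]; ring

lemma Dsum_lt (k : ℕ) (c : ℕ → ℕ) (hc : ∀ i, c i ≤ 1) : Dsum k c < 2 ^ k := by
  induction k with
  | zero => simp [Dsum_zero]
  | succ k ih =>
    rw [Dsum_succ]
    have := hc (k+1)
    have : 2 ^ (k+1) = 2 * 2 ^ k := by ring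
    omega

lemma Dsum_inj (k : ℕ) (c c' : ℕ → ℕ) (hc : ∀ i, c i ≤ 1) (hc' : ∀ i, c' i ≤ 1)
    (h : Dsum k c = Dsum k c') : ∀ i ∈ Finset.Icc 1 k, c i = c' i := by
  induction k with
  | zero => simp
  | succ k ih =>
    rw [Dsum_succ, Dsum_succ] at h
    have h1 := hc (k+1)
    have h2 := hc' (k+1)
    have htop : c (k+1) = c' (k+1) ∧ Dsum k c = Dsum k c' := by omega
    intro i hi
    simp only [Finset.mem_Icc] at hi
    rcases Nat.lt_or_ge i (k+1) with h' | h'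
    · exact ih htop.2 i (Finset.mem_Icc.mpr ⟨hi.1, by omega⟩)
    · have : i = k + 1 := by omega
      rw [this]; exact htop.1

lemma Dsum_add (k l : ℕ) (c : ℕ → ℕ) :
    Dsum (k + l) c = Dsum k c * 2 ^ l + Dsum l (fun i => c (k + i)) := by
  induction l with
  | zero => simp [Dsum_zero]
  | succ l ih =>
    have h1 : k + (l + 1) = (k + l) + 1 := by omega
    rw [h1, Dsum_succ, ih, Dsum_succ]
    have : k + l + 1 = k + (l + 1) := by omega
    rw [this]; ring

lemma sum_phi_eq (m : ℕ) (c : ℕ → ℕ) :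
    (∑ i ∈ Finset.Icc 1 m, (c i : ℝ) * (2:ℝ) ^ (-(i:ℤ))) = (Dsum m c : ℝ) / 2 ^ m := by
  unfold Dsum
  push_cast
  rw [Finset.sum_div]
  refine Finset.sum_congr rfl fun i hi => ?_
  simp only [Finset.mem_Icc] at hi
  have h2 : (2:ℝ) ≠ 0 := two_ne_zero
  rw [mul_div_assoc]
  congr 1
  have : ((2:ℝ) ^ (m - i) : ℝ) = (2:ℝ) ^ ((m:ℤ) - (i:ℤ)) := by
    rw [← zpow_natCast]
    congr 1
    omega
  rw [this, ← zpow_natCast (2:ℝ) m, ← zpow_sub₀ h2]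
  congr 1
  omega

lemma interval_iff (m k : ℕ) (hk : k ≤ m) (c : ℕ → ℕ) (hc : ∀ i, c i ≤ 1) (a : ℕ)
    (ha : a < 2 ^ k) :
    (∑ i ∈ Finset.Icc 1 m, (c i : ℝ) * (2:ℝ) ^ (-(i:ℤ))) ∈
      Set.Ico ((a : ℝ) / 2 ^ k) (((a : ℝ) + 1) / 2 ^ k) ↔ Dsum k c = a := by
  rw [sum_phi_eq]
  obtain ⟨l, rfl⟩ : ∃ l, m = k + l := ⟨m - k, by omega⟩
  have hP : (0:ℕ) < 2 ^ l := Nat.pow_pos (n := l) (by norm_num)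
  have hsplit := Dsum_add k l c
  set T := Dsum (k + l) c with hT
  set H := Dsum k c with hH
  set L := Dsum l (fun i => c (k + i)) with hL
  have hLlt : L < 2 ^ l := Dsum_lt l _ (fun i => hc _)
  have hreal : ((T:ℝ) / 2 ^ (k+l) ∈ Set.Ico ((a : ℝ) / 2 ^ k) (((a : ℝ) + 1) / 2 ^ k)) ↔
      (a * 2 ^ l ≤ T ∧ T < (a + 1) * 2 ^ l) := by
    rw [Set.mem_Ico, div_le_div_iff₀ (by positivity) (by positivity),
      div_lt_div_iff₀ (by positivity) (by positivity)]
    have hpow : (2:ℝ) ^ (k + l) = 2 ^ k * 2 ^ l := by rw [pow_add]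
    rw [hpow]
    constructor
    · rintro ⟨h1, h2⟩
      constructor
      · have : (a:ℝ) * 2 ^ l ≤ (T:ℝ) := by
          have h2k : (0:ℝ) < 2 ^ k := by positivity
          nlinarith
        exact_mod_cast this
      · have : (T:ℝ) < ((a:ℝ) + 1) * 2 ^ l := by
          have h2k : (0:ℝ) < 2 ^ k := by positivity
          nlinarith
        exact_mod_cast (by push_cast at this ⊢; linarith : (T:ℝ) < ((a + 1 : ℕ):ℝ) * 2 ^ l)
    · rintro ⟨h1, h2⟩
      have h1' : (a:ℝ) * 2 ^ l ≤ (T:ℝ) := by exact_mod_cast h1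
      have h2' : (T:ℝ) < ((a:ℝ) + 1) * 2 ^ l := by
        have := h2
        push_cast at this ⊢
        exact_mod_cast this
      constructor <;> nlinarith [pow_pos (show (0:ℝ) < 2 by norm_num) k]
  rw [hreal]
  constructor
  · rintro ⟨h1, h2⟩
    have ha' : a ≤ T / 2 ^ l := (Nat.le_div_iff_mul_le hP).mpr h1
    have ha'' : T / 2 ^ l < a + 1 := (Nat.div_lt_iff_lt_mul hP).mpr h2
    have hdiv : T / 2 ^ l = H := by
      rw [hsplit, Nat.mul_comm, Nat.mul_add_div hP, Nat.div_eq_of_lt hLlt]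
      omega
    omega
  · rintro rfl
    constructor
    · rw [hsplit]; exact Nat.le_add_right _ _
    · rw [hsplit]
      calc H * 2 ^ l + L < H * 2 ^ l + 2 ^ l := by omega
        _ = (H + 1) * 2 ^ l := by ring

lemma bit_le (n i : ℕ) : bit n i ≤ 1 := by unfold bit; split <;> omega

lemma pbit_le (m n i : ℕ) : pbit m n i ≤ 1 := by
  have := Nat.mod_lt (∑ j ∈ Finset.Icc 1 m, (Nat.choose (j-1) (i-1) % 2) * bit n j)
    (show 0 < 2 by norm_num)
  unfold pbit; omega

lemma natcast_zmod2_inj {x y : ℕ} (hx : x ≤ 1) (hy : y ≤ 1) (h : (x : ZMod 2) = y) : x = y := by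
  have := (ZMod.natCast_eq_natCast_iff x y 2).mp h
  unfold Nat.ModEq at this
  omega

lemma pbit_cast (m n i : ℕ) : ((pbit m n i : ZMod 2)) =
    ∑ j ∈ Finset.range m, ((Nat.choose j (i-1) : ZMod 2)) * (bit n (j+1) : ZMod 2) := by
  unfold pbit
  rw [ZMod.natCast_mod, Nat.cast_sum,
    show Finset.Icc 1 m = Finset.Ico 1 (m+1) from rfl, Finset.sum_Ico_eq_sum_range,
    show m + 1 - 1 = m from rfl]
  refine Finset.sum_congr rfl fun j hj => ?_
  rw [Nat.cast_mul, ZMod.natCast_mod, show 1 + j - 1 = j by omega, show 1 + j = j + 1 by omega]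

lemma two_eq_zero_poly : (2 : Polynomial (ZMod 2)) = 0 := by
  rw [show (2:Polynomial (ZMod 2)) = ((2:ℕ):Polynomial (ZMod 2)) by norm_cast,
      ← Polynomial.C_eq_natCast, show ((2:ℕ):ZMod 2) = 0 by decide, Polynomial.C_0]

lemma key_inj (m k l : ℕ) (hkl : k + l = m) (n n' : ℕ) (hn : n < 2 ^ m) (hn' : n' < 2 ^ m)
    (h1 : ∀ i ∈ Finset.Icc 1 k, bit n i = bit n' i)
    (h2 : ∀ i ∈ Finset.Icc 1 l, pbit m n i = pbit m n' i) : n = n' := by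
  classical
  set d : ℕ → ZMod 2 := fun j => (bit n j : ZMod 2) - (bit n' j : ZMod 2) with hd
  set p : Polynomial (ZMod 2) := ∑ j ∈ Finset.range m, Polynomial.C (d (j+1)) * Polynomial.X ^ j
    with hp
  have hcoeff : ∀ t, p.coeff t = if t < m then d (t+1) else 0 := by
    intro t
    rw [hp, Polynomial.finset_sum_coeff]
    simp only [Polynomial.coeff_C_mul, Polynomial.coeff_X_pow, mul_ite, mul_one, mul_zero]
    rw [Finset.sum_ite_eq (Finset.range m) t (fun j => d (j+1))]
    simp [Finset.mem_range]
  -- p = 0 suffices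
  suffices hp0 : p = 0 by
    have hbits : ∀ j, bit n j = bit n' j := by
      intro j
      rcases Nat.lt_or_ge (j-1) m with hj | hj
      · have := hcoeff (j - 1)
        rw [hp0] at this
        simp only [Polynomial.coeff_zero, hj, if_true] at this
        have hdj : d (j - 1 + 1) = 0 := this.symm
        have : (bit n (j-1+1) : ZMod 2) = (bit n' (j-1+1) : ZMod 2) := by
          have := sub_eq_zero.mp hdj
          exact_mod_cast this
        have heq := natcast_zmod2_inj (bit_le n _) (bit_le n' _) this
        rcases Nat.eq_zero_or_pos j with rfl | hjpos
        · unfold bit at heq ⊢; simpa using heq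
        · rwa [show j - 1 + 1 = j by omega] at heq
      · unfold bit
        rw [Nat.testBit_eq_false_of_lt (lt_of_lt_of_le hn (Nat.pow_le_pow_right (by norm_num) hj)),
          Nat.testBit_eq_false_of_lt (lt_of_lt_of_le hn' (Nat.pow_le_pow_right (by norm_num) hj))]
    apply Nat.eq_of_testBit_eq
    intro i
    have := hbits (i+1)
    unfold bit at this
    simp only [Nat.add_sub_cancel] at this
    by_cases h : n.testBit i <;> by_cases h' : n'.testBit i <;> simp [h, h'] at this ⊢
  -- show p = 0 via divisibility
  have hdeg : p.degree < (m : ℕ) := by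
    rw [Polynomial.degree_lt_iff_coeff_zero]
    intro t ht
    rw [hcoeff t, if_neg (by exact_mod_cast not_lt.mpr (by exact_mod_cast ht))]
  have hXk : (Polynomial.X : Polynomial (ZMod 2)) ^ k ∣ p := by
    rw [Polynomial.X_pow_dvd_iff]
    intro t ht
    rw [hcoeff t, if_pos (by omega)]
    have := h1 (t+1) (Finset.mem_Icc.mpr ⟨by omega, by omega⟩)
    simp [hd, this]
  set q : Polynomial (ZMod 2) := p.comp (Polynomial.X + 1) with hq
  have hqcoeff : ∀ t, q.coeff t = ∑ j ∈ Finset.range m, d (j+1) * (Nat.choose j t : ZMod 2) := by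
    intro t
    rw [hq, hp]
    rw [Polynomial.sum_comp]
    simp only [Polynomial.mul_comp, Polynomial.C_comp, Polynomial.pow_comp, Polynomial.X_comp]
    rw [Polynomial.finset_sum_coeff]
    refine Finset.sum_congr rfl fun j hj => ?_
    rw [Polynomial.coeff_C_mul, Polynomial.coeff_X_add_one_pow]
  have hXl : (Polynomial.X : Polynomial (ZMod 2)) ^ l ∣ q := by
    rw [Polynomial.X_pow_dvd_iff]
    intro t ht
    rw [hqcoeff t]
    have hcast : (∑ j ∈ Finset.range m, d (j+1) * (Nat.choose j t : ZMod 2)) =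
        (pbit m n (t+1) : ZMod 2) - (pbit m n' (t+1) : ZMod 2) := by
      rw [pbit_cast, pbit_cast]
      rw [← Finset.sum_sub_distrib]
      refine Finset.sum_congr rfl fun j hj => ?_
      simp only [Nat.add_sub_cancel, hd]
      ring
    rw [hcast, h2 (t+1) (Finset.mem_Icc.mpr ⟨by omega, by omega⟩), sub_self]
  have hXl1 : (Polynomial.X + 1 : Polynomial (ZMod 2)) ^ l ∣ p := by
    obtain ⟨r, hr⟩ := hXl
    have hcomp : (Polynomial.X + 1 : Polynomial (ZMod 2)).comp (Polynomial.X + 1) =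
        Polynomial.X := by
      simp only [Polynomial.add_comp, Polynomial.X_comp, Polynomial.one_comp]
      have : (Polynomial.X : Polynomial (ZMod 2)) + 1 + 1 = Polynomial.X + 2 := by ring
      rw [this, two_eq_zero_poly, add_zero]
    have hpq : p = q.comp (Polynomial.X + 1) := by
      rw [hq, Polynomial.comp_assoc, hcomp, Polynomial.comp_X]
    rw [hpq, hr]
    rw [Polynomial.mul_comp, Polynomial.pow_comp, Polynomial.X_comp]
    exact Dvd.intro _ rfl
  have hcop : IsCoprime ((Polynomial.X : Polynomial (ZMod 2)) ^ k)
      ((Polynomial.X + 1 : Polynomial (ZMod 2)) ^ l) := by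
    refine IsCoprime.pow ?_
    refine ⟨1, 1, ?_⟩
    have : (1:Polynomial (ZMod 2)) * Polynomial.X + 1 * (Polynomial.X + 1) =
        2 * Polynomial.X + 1 := by ring
    rw [this, two_eq_zero_poly, zero_mul, zero_add]
  have hdvd : (Polynomial.X : Polynomial (ZMod 2)) ^ k *
      (Polynomial.X + 1 : Polynomial (ZMod 2)) ^ l ∣ p := hcop.mul_dvd hXk hXl1
  by_contra hpne
  have hdlow := Polynomial.degree_le_of_dvd hdvd hpne
  have hdm : ((Polynomial.X : Polynomial (ZMod 2)) ^ k *
      (Polynomial.X + 1 : Polynomial (ZMod 2)) ^ l).degree = (m : ℕ) := by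
    rw [Polynomial.degree_mul, Polynomial.degree_X_pow, ← Polynomial.C_1,
      Polynomial.degree_pow, Polynomial.degree_X_add_C]
    simp only [nsmul_eq_mul, mul_one]
    rw [← Nat.cast_add, hkl]
  rw [hdm] at hdlow
  exact absurd (lt_of_le_of_lt hdlow hdeg) (lt_irrefl _)

theorem stmt_11 (m k l a b : ℕ) (hkl : k + l = m) (ha : a < 2 ^ k) (hb : b < 2 ^ l) :
    ∃! n : ℕ, n < 2 ^ m ∧
      phi m n ∈ Set.Ico ((a : ℝ) / 2 ^ k) (((a : ℝ) + 1) / 2 ^ k) ∧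
      phiP m n ∈ Set.Ico ((b : ℝ) / 2 ^ l) (((b : ℝ) + 1) / 2 ^ l) := by
  have hk : k ≤ m := by omega
  have hl : l ≤ m := by omega
  have hiff1 : ∀ n : ℕ, (phi m n ∈ Set.Ico ((a : ℝ) / 2 ^ k) (((a : ℝ) + 1) / 2 ^ k) ↔
      Dsum k (bit n) = a) := fun n => interval_iff m k hk (bit n) (bit_le n) a ha
  have hiff2 : ∀ n : ℕ, (phiP m n ∈ Set.Ico ((b : ℝ) / 2 ^ l) (((b : ℝ) + 1) / 2 ^ l) ↔
      Dsum l (pbit m n) = b) := fun n => interval_iff m l hl (pbit m n) (pbit_le m n) b hb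
  set F : ℕ → ℕ × ℕ := fun n => (Dsum k (bit n), Dsum l (pbit m n)) with hF
  have hinj : ∀ n ∈ Finset.range (2 ^ m), ∀ n' ∈ Finset.range (2 ^ m), F n = F n' → n = n' := by
    intro n hn n' hn' h
    rw [hF, Prod.ext_iff] at h
    exact key_inj m k l hkl n n' (Finset.mem_range.mp hn) (Finset.mem_range.mp hn')
      (Dsum_inj k _ _ (bit_le n) (bit_le n') h.1)
      (Dsum_inj l _ _ (pbit_le m n) (pbit_le m n') h.2)
  have hmaps : ∀ n ∈ Finset.range (2 ^ m),
      F n ∈ (Finset.range (2 ^ k)) ×ˢ (Finset.range (2 ^ l)) := by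
    intro n _
    simp only [hF, Finset.mem_product, Finset.mem_range]
    exact ⟨Dsum_lt k _ (bit_le n), Dsum_lt l _ (pbit_le m n)⟩
  have himg : (Finset.range (2 ^ m)).image F = (Finset.range (2 ^ k)) ×ˢ (Finset.range (2 ^ l)) := by
    apply Finset.eq_of_subset_of_card_le
    · intro p hp
      obtain ⟨n, hn, rfl⟩ := Finset.mem_image.mp hp
      exact hmaps n hn
    · rw [Finset.card_product, Finset.card_range, Finset.card_range,
        Finset.card_image_of_injOn (fun x hx y hy h => hinj x hx y hy h), Finset.card_range,
        ← pow_add, hkl]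
  have hab : (a, b) ∈ (Finset.range (2 ^ k)) ×ˢ (Finset.range (2 ^ l)) := by
    simp [Finset.mem_product, ha, hb]
  rw [← himg] at hab
  obtain ⟨n0, hn0, hFn0⟩ := Finset.mem_image.mp hab
  rw [hF, Prod.ext_iff] at hFn0
  refine ⟨n0, ⟨Finset.mem_range.mp hn0, (hiff1 n0).mpr hFn0.1, (hiff2 n0).mpr hFn0.2⟩, ?_⟩
  rintro n' ⟨hn', hc1, hc2⟩
  refine hinj n' (Finset.mem_range.mpr hn') n0 hn0 ?_
  rw [hF, Prod.ext_iff]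
  exact ⟨((hiff1 n').mp hc1).trans hFn0.1.symm, ((hiff2 n').mp hc2).trans hFn0.2.symm⟩
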